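/- For complex s with Re(s) > 1, s not an integer, real x with 0 < x < 2π, and real y, one has Σ_{n=1}^∞ cos(nx+y)/n^s = ((2π)^s / (2 Γ(s) sin(πs))) · ( sin(y + πs/2) ζ(1−s, 1 − x/(2π)) − sin(y − πs/2) ζ(1−s, x/(2π)) ). -/

import Mathlib

open HurwitzZeta Real Filter

theorem cos_series_hurwitz (s : ℂ) (hs : 1 < s.re) (hsi : ∀ n : ℤ, s ≠ n)
    (x y : ℝ) (hx : 0 < x) (hx' : x < 2 * π) :
    ∑' n : ℕ+, Complex.cos ((n : ℂ) * x + y) / (n : ℂ) ^ s =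
      ((2 * π : ℝ) : ℂ) ^ s / (2 * Complex.Gamma s * Complex.sin (π * s)) *
        (Complex.sin ((y : ℂ) + π * s / 2) *
            hurwitzZeta ((1 - x / (2 * π) : ℝ) : UnitAddCircle) (1 - s) -
          Complex.sin ((y : ℂ) - π * s / 2) *
            hurwitzZeta ((x / (2 * π) : ℝ) : UnitAddCircle) (1 - s)) := by
  have hpi : (0 : ℝ) < π := Real.pi_pos
  have hπC : (π : ℂ) ≠ 0 := Complex.ofReal_ne_zero.mpr hpi.ne'
  set a : ℝ := x / (2 * π) with ha_def
  have ha0 : 0 < a := div_pos hx (by positivity)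
  have ha1 : a < 1 := (div_lt_one (by positivity)).mpr hx'
  have hs0 : s ≠ 0 := fun h => hsi 0 (by simp [h])
  have hsnat : ∀ n : ℕ, s ≠ -n := fun n => by
    have := hsi (-n); simpa using this
  have hGamma : Complex.Gamma s ≠ 0 := Complex.Gamma_ne_zero hsnat
  have hsin : Complex.sin (π * s) ≠ 0 := by
    rw [Ne, Complex.sin_eq_zero_iff]
    rintro ⟨k, hk⟩
    have : s = (k : ℂ) := by
      have h : (π:ℂ) * s = (π:ℂ) * k := by rw [hk]; ring
      exact mul_left_cancel₀ hπC h
    exact hsi k this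
  have haC : (↑a : UnitAddCircle) ≠ 0 := by
    rw [Ne, AddCircle.coe_eq_zero_iff]
    rintro ⟨n, hn⟩
    simp only [zsmul_eq_mul, mul_one] at hn
    have h0 : (0:ℝ) < n := by rw [← hn] at ha0; exact_mod_cast ha0
    have h1 : (n:ℝ) < 1 := by rw [← hn] at ha1; exact_mod_cast ha1
    have h0' : (0:ℤ) < n := by exact_mod_cast h0
    have h1' : (n:ℤ) < 1 := by exact_mod_cast h1
    omega
  have hco : ((1 - a : ℝ) : UnitAddCircle) = -(↑a : UnitAddCircle) := by
    rw [sub_eq_add_neg, AddCircle.coe_add, AddCircle.coe_neg,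
      (AddCircle.coe_period (p := (1:ℝ))), zero_add]
  have h1 := hurwitzZeta_one_sub (↑a : UnitAddCircle) hsnat (Or.inl haC)
  have h2 := hurwitzZeta_one_sub (-(↑a : UnitAddCircle)) hsnat (Or.inl (neg_ne_zero.mpr haC))
  rw [neg_neg] at h2
  have hE1 := hasSum_expZeta_of_one_lt_re a hs
  have hE2 := hasSum_expZeta_of_one_lt_re (-a) hs
  have hEneg : expZeta ((-a : ℝ) : UnitAddCircle) = expZeta (-(↑a : UnitAddCircle)) := by
    rw [AddCircle.coe_neg]
  rw [hEneg] at hE2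
  set E₁ := expZeta (↑a : UnitAddCircle) s with hE₁def
  set E₂ := expZeta (-(↑a : UnitAddCircle)) s with hE₂def
  have hsum : HasSum (fun n : ℕ ↦ Complex.cos ((n : ℂ) * x + y) / (n : ℂ) ^ s)
      (Complex.exp (y * Complex.I) / 2 * E₁ + Complex.exp (-(y * Complex.I)) / 2 * E₂) := by
    have := (hE1.mul_left (Complex.exp (y * Complex.I) / 2)).add
      (hE2.mul_left (Complex.exp (-(y * Complex.I)) / 2))
    refine this.congr_fun fun n => ?_
    have hxa : (2 * (π:ℂ) * Complex.I * a * n) = (n * x) * Complex.I := by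
      rw [ha_def]
      push_cast
      field_simp
    have hxa' : (2 * (π:ℂ) * Complex.I * ((-a : ℝ) : ℂ) * n) = -((n * x) * Complex.I) := by
      rw [ha_def]
      push_cast
      field_simp
    rw [hxa, hxa', Complex.cos,
      show ((n:ℂ) * x + y) * Complex.I = (n:ℂ) * x * Complex.I + y * Complex.I by ring,
      show (-((n:ℂ) * x + y)) * Complex.I = -((n:ℂ) * x * Complex.I) + -(y * Complex.I) by ring,
      Complex.exp_add, Complex.exp_add]
    ring
  have hsum' : HasSum (fun n : ℕ+ ↦ Complex.cos ((n : ℂ) * x + y) / (n : ℂ) ^ s)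
      (Complex.exp (y * Complex.I) / 2 * E₁ + Complex.exp (-(y * Complex.I)) / 2 * E₂) := by
    have hinj : Function.Injective (fun n : ℕ+ ↦ (n : ℕ)) := fun m n h => by
      exact PNat.coe_injective h
    have := (Function.Injective.hasSum_iff hinj ?_).mpr hsum
    · exact this.congr_fun fun n => by norm_num
    · intro n hn
      have hn0 : n = 0 := by
        by_contra h
        exact hn ⟨⟨n, Nat.pos_of_ne_zero h⟩, rfl⟩
      simp [hn0, Complex.zero_cpow hs0]
  rw [hsum'.tsum_eq, hco, h1, h2]
  -- now pure algebra
  have hbase : (2 * (π:ℂ)) ≠ 0 := mul_ne_zero two_ne_zero hπC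
  have hW : (2 * (π:ℂ)) ^ s ≠ 0 := fun h => hbase ((Complex.cpow_eq_zero_iff _ _).mp h).1
  rw [show ((2 * π : ℝ) : ℂ) = 2 * (π : ℂ) by push_cast; ring, Complex.cpow_neg]
  set W := (2 * (π:ℂ)) ^ s with hWdef
  -- express sines and exponentials via v = exp(π I s / 2), u = exp(y I)
  set v := Complex.exp ((π:ℂ) * Complex.I * s / 2) with hvdef
  have hvne : v ≠ 0 := Complex.exp_ne_zero _
  have hune : Complex.exp ((y:ℂ) * Complex.I) ≠ 0 := Complex.exp_ne_zero _
  have ev : Complex.exp (-(π:ℂ) * Complex.I * s / 2) = v⁻¹ := by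
    rw [hvdef, ← Complex.exp_neg]; congr 1; ring
  have esin : Complex.sin ((π:ℂ) * s) = (v⁻¹ * v⁻¹ - v * v) * Complex.I / 2 := by
    rw [Complex.sin,
      show -((π:ℂ) * s) * Complex.I = -((π:ℂ) * Complex.I * s / 2) + -((π:ℂ) * Complex.I * s / 2) by ring,
      show ((π:ℂ) * s) * Complex.I = (π:ℂ) * Complex.I * s / 2 + (π:ℂ) * Complex.I * s / 2 by ring,
      Complex.exp_add, Complex.exp_add, Complex.exp_neg, hvdef]
  have esin1 : Complex.sin ((y:ℂ) + (π:ℂ) * s / 2) =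
      (Complex.exp (-((y:ℂ) * Complex.I)) * v⁻¹ - Complex.exp ((y:ℂ) * Complex.I) * v) * Complex.I / 2 := by
    rw [Complex.sin,
      show -((y:ℂ) + (π:ℂ) * s / 2) * Complex.I = -((y:ℂ) * Complex.I) + -((π:ℂ) * Complex.I * s / 2) by ring,
      show ((y:ℂ) + (π:ℂ) * s / 2) * Complex.I = (y:ℂ) * Complex.I + (π:ℂ) * Complex.I * s / 2 by ring,
      Complex.exp_add, Complex.exp_add, Complex.exp_neg (((π:ℂ) * Complex.I * s / 2)), hvdef]
  have esin2 : Complex.sin ((y:ℂ) - (π:ℂ) * s / 2) =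
      (Complex.exp (-((y:ℂ) * Complex.I)) * v - Complex.exp ((y:ℂ) * Complex.I) * v⁻¹) * Complex.I / 2 := by
    rw [Complex.sin,
      show -((y:ℂ) - (π:ℂ) * s / 2) * Complex.I = -((y:ℂ) * Complex.I) + (π:ℂ) * Complex.I * s / 2 by ring,
      show ((y:ℂ) - (π:ℂ) * s / 2) * Complex.I = (y:ℂ) * Complex.I + -((π:ℂ) * Complex.I * s / 2) by ring,
      Complex.exp_add, Complex.exp_add, Complex.exp_neg (((π:ℂ) * Complex.I * s / 2)), hvdef]
  have hsinv : (v⁻¹ * v⁻¹ - v * v) ≠ 0 := by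
    intro h
    apply hsin
    rw [esin, h, zero_mul, zero_div]
  rw [esin, esin1, esin2, ev]
  have hv4 : (1:ℂ) - v^4 ≠ 0 := by
    intro h
    apply hsinv
    have hv2 : (v:ℂ)^2 ≠ 0 := pow_ne_zero _ hvne
    have hfrac : v⁻¹ * v⁻¹ - v * v = (1 - v^4) / v^2 := by
      field_simp
    rw [hfrac, h, zero_div]
  have hD : Complex.I * W * v ^ 2 * Complex.Gamma s * 4 -
      Complex.I * W * v ^ 6 * Complex.Gamma s * 4 ≠ 0 := by
    have h : Complex.I * W * v ^ 2 * Complex.Gamma s * 4 -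
        Complex.I * W * v ^ 6 * Complex.Gamma s * 4 =
        Complex.I * W * Complex.Gamma s * 4 * (v ^ 2 * (1 - v ^ 4)) := by ring
    rw [h]
    exact mul_ne_zero (mul_ne_zero (mul_ne_zero (mul_ne_zero Complex.I_ne_zero hW) hGamma)
      (by norm_num)) (mul_ne_zero (pow_ne_zero _ hvne) hv4)
  have hDinv : (Complex.I * W * v ^ 2 * Complex.Gamma s * 4 -
      Complex.I * W * v ^ 6 * Complex.Gamma s * 4) *
      (Complex.I * W * v ^ 2 * Complex.Gamma s * 4 -
      Complex.I * W * v ^ 6 * Complex.Gamma s * 4)⁻¹ = 1 := mul_inv_cancel₀ hD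
  field_simp
  ring
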